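/- Let A, B be lower triangular n×n matrices over ℝ (or ℂ), each with constant diagonal, such that e^A e^B = e^B e^A. Then for all real t, e^{tA} e^{tB} = e^{tB} e^{tA}. -/

import Mathlib

open NormedSpace

/-- `A` is lower triangular with all diagonal entries equal (the set `𝕋_n(K)`). -/
def LowerTriConstDiag {K : Type*} [Semiring K] {n : ℕ}
    (A : Matrix (Fin n) (Fin n) K) : Prop :=
  (∀ i j : Fin n, i < j → A i j = 0) ∧ ∀ i j : Fin n, A i i = A j j

/-- A strictly lower triangular matrix is nilpotent of index at most `n`. -/
lemma aux_strict_pow {K : Type*} [Ring K] {n : ℕ} {M : Matrix (Fin n) (Fin n) K}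
    (hM : ∀ i j : Fin n, (i : ℕ) ≤ j → M i j = 0) : M ^ n = 0 := by
  have key : ∀ k : ℕ, ∀ i j : Fin n, (i : ℕ) < k + j → (M ^ k) i j = 0 := by
    intro k
    induction k with
    | zero =>
      intro i j hij
      have hne : i ≠ j := fun h => by subst h; omega
      simp [pow_zero, Matrix.one_apply, hne]
    | succ k ih =>
      intro i j hij
      rw [pow_succ, Matrix.mul_apply]
      refine Finset.sum_eq_zero fun l _ => ?_
      by_cases hl : (i : ℕ) < k + l
      · rw [ih i l hl, zero_mul]
      · rw [hM l j (by omega), mul_zero]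
  ext i j
  simpa using key n i j (by omega)

/-- Finite-sum formula for the exponential of a scalar multiple of a nilpotent matrix. -/
lemma aux_exp_nilp {𝕂 : Type*} [RCLike 𝕂] {n : ℕ} (M : Matrix (Fin n) (Fin n) 𝕂)
    (hM : M ^ n = 0) (z : 𝕂) :
    exp (z • M) = ∑ a ∈ Finset.range n,
      (z ^ a * ((a.factorial : 𝕂))⁻¹) • M ^ a := by
  rw [exp_eq_tsum (𝕂 := 𝕂)]
  show (∑' a : ℕ, ((a.factorial : 𝕂))⁻¹ • (z • M) ^ a) = _
  rw [tsum_eq_sum (s := Finset.range n) (fun a ha => ?_)]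
  · refine Finset.sum_congr rfl fun a _ => ?_
    rw [smul_pow, smul_smul, mul_comm]
  · have hn : n ≤ a := le_of_not_gt (Finset.mem_range.not.mp ha)
    rw [smul_pow, pow_eq_zero_of_le hn hM, smul_zero, smul_zero]

lemma aux_exp_smul_one {𝕂 : Type*} [RCLike 𝕂] {n : ℕ} (c : 𝕂) :
    exp (c • (1 : Matrix (Fin n) (Fin n) 𝕂)) = exp c • (1 : Matrix (Fin n) (Fin n) 𝕂) := by
  have h1 : c • (1 : Matrix (Fin n) (Fin n) 𝕂) = Matrix.diagonal (fun _ => c) := by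
    ext i j
    by_cases h : i = j <;> simp [Matrix.one_apply, h]
  rw [h1, Matrix.exp_diagonal]
  ext i j
  by_cases h : i = j <;> simp [Matrix.one_apply, h, Pi.exp_def]

/-- Lemma 10.1(i): if `A, B ∈ 𝕋_n(𝕂)` (𝕂 = ℝ or ℂ) satisfy `e^A e^B = e^B e^A`,
then `e^{tA} e^{tB} = e^{tB} e^{tA}` for every real `t`. -/
theorem exp_smul_commute_of_exp_commute
    {𝕂 : Type*} [RCLike 𝕂] (n : ℕ) (A B : Matrix (Fin n) (Fin n) 𝕂)
    (hA : LowerTriConstDiag A) (hB : LowerTriConstDiag B)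
    (h : exp A * exp B = exp B * exp A) :
    ∀ t : ℝ, exp ((t : 𝕂) • A) * exp ((t : 𝕂) • B) =
      exp ((t : 𝕂) • B) * exp ((t : 𝕂) • A) := by
  intro t
  rcases Nat.eq_zero_or_pos n with hn | hn
  · subst hn
    ext i j
    exact i.elim0
  set i0 : Fin n := ⟨0, hn⟩ with hi0
  set c := A i0 i0 with hc
  set d := B i0 i0 with hd
  set N := A - c • 1 with hNdef
  set N' := B - d • 1 with hN'def
  have hstrict : ∀ (M : Matrix (Fin n) (Fin n) 𝕂), LowerTriConstDiag M →
      ∀ i j : Fin n, (i : ℕ) ≤ j → (M - M i0 i0 • 1) i j = 0 := by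
    intro M hM i j hij
    have hval : (M - M i0 i0 • 1) i j = M i j - (if i = j then M i0 i0 else 0) := by
      simp [Matrix.sub_apply, Matrix.smul_apply, Matrix.one_apply, mul_ite, mul_one, mul_zero]
    rcases eq_or_lt_of_le hij with heq | hlt
    · have hij' : i = j := Fin.ext heq
      subst hij'
      rw [hval, if_pos rfl, hM.2 i i0, sub_self]
    · have hlt' : i < j := Fin.lt_def.mpr hlt
      rw [hval, hM.1 i j hlt', if_neg (Fin.ne_of_lt hlt'), sub_zero]
  have hNpow : N ^ n = 0 := aux_strict_pow (hstrict A hA)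
  have hN'pow : N' ^ n = 0 := aux_strict_pow (hstrict B hB)
  have hexpA : ∀ z : 𝕂, exp (z • A) = exp (z * c) • exp (z • N) := by
    intro z
    have hAeq : z • A = (z * c) • (1 : Matrix (Fin n) (Fin n) 𝕂) + z • N := by
      rw [hNdef]; module
    have hcm : Commute ((z * c) • (1 : Matrix (Fin n) (Fin n) 𝕂)) (z • N) :=
      ((Commute.one_left (z • N)).smul_left (z * c))
    rw [hAeq, Matrix.exp_add_of_commute _ _ hcm, aux_exp_smul_one, smul_mul_assoc, one_mul]
  have hexpB : ∀ z : 𝕂, exp (z • B) = exp (z * d) • exp (z • N') := by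
    intro z
    have hBeq : z • B = (z * d) • (1 : Matrix (Fin n) (Fin n) 𝕂) + z • N' := by
      rw [hN'def]; module
    have hcm : Commute ((z * d) • (1 : Matrix (Fin n) (Fin n) 𝕂)) (z • N') :=
      ((Commute.one_left (z • N')).smul_left (z * d))
    rw [hBeq, Matrix.exp_add_of_commute _ _ hcm, aux_exp_smul_one, smul_mul_assoc, one_mul]
  have hnat : ∀ k : ℕ, exp ((k : 𝕂) • N) * exp ((k : 𝕂) • N')
      = exp ((k : 𝕂) • N') * exp ((k : 𝕂) • N) := by
    intro k
    have h1 : exp ((k : 𝕂) • A) * exp ((k : 𝕂) • B)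
        = exp ((k : 𝕂) • B) * exp ((k : 𝕂) • A) := by
      rw [Nat.cast_smul_eq_nsmul, Nat.cast_smul_eq_nsmul, Matrix.exp_nsmul, Matrix.exp_nsmul]
      exact Commute.pow_pow h k k
    rw [hexpA, hexpB, smul_mul_assoc, smul_mul_assoc, mul_smul_comm, mul_smul_comm,
      smul_smul, smul_smul, mul_comm (exp ((k : 𝕂) * d)) (exp ((k : 𝕂) * c))] at h1
    have hne : exp ((k : 𝕂) * c) * exp ((k : 𝕂) * d) ≠ 0 :=
      mul_ne_zero (NormedSpace.isUnit_exp _).ne_zero (NormedSpace.isUnit_exp _).ne_zero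
    exact smul_right_injective (Matrix (Fin n) (Fin n) 𝕂) hne h1
  have hEform : ∀ z : 𝕂,
      exp (z • N) * exp (z • N') - exp (z • N') * exp (z • N)
      = ∑ a ∈ Finset.range n, ∑ b ∈ Finset.range n,
          (z ^ (a + b) * ((a.factorial : 𝕂)⁻¹ * (b.factorial : 𝕂)⁻¹)) •
            (N ^ a * N' ^ b - N' ^ b * N ^ a) := by
    intro z
    have e1 : exp (z • N) * exp (z • N')
        = ∑ a ∈ Finset.range n, ∑ b ∈ Finset.range n,
          (z ^ (a + b) * ((a.factorial : 𝕂)⁻¹ * (b.factorial : 𝕂)⁻¹)) • (N ^ a * N' ^ b) := by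
      rw [aux_exp_nilp N hNpow z, aux_exp_nilp N' hN'pow z, Finset.sum_mul_sum]
      refine Finset.sum_congr rfl fun a _ => Finset.sum_congr rfl fun b _ => ?_
      rw [smul_mul_assoc, mul_smul_comm, smul_smul]
      congr 1
      ring
    have e2 : exp (z • N') * exp (z • N)
        = ∑ a ∈ Finset.range n, ∑ b ∈ Finset.range n,
          (z ^ (a + b) * ((a.factorial : 𝕂)⁻¹ * (b.factorial : 𝕂)⁻¹)) • (N' ^ b * N ^ a) := by
      rw [aux_exp_nilp N' hN'pow z, aux_exp_nilp N hNpow z, Finset.sum_mul_sum, Finset.sum_comm]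
      refine Finset.sum_congr rfl fun a _ => Finset.sum_congr rfl fun b _ => ?_
      rw [smul_mul_assoc, mul_smul_comm, smul_smul]
      congr 1
      ring
    rw [e1, e2, ← Finset.sum_sub_distrib]
    refine Finset.sum_congr rfl fun a _ => ?_
    rw [← Finset.sum_sub_distrib]
    refine Finset.sum_congr rfl fun b _ => ?_
    rw [smul_sub]
  have hzero : ∀ z : 𝕂,
      exp (z • N) * exp (z • N') - exp (z • N') * exp (z • N) = 0 := by
    intro z
    ext i j
    rw [Matrix.zero_apply]
    set p : Polynomial 𝕂 := ∑ a ∈ Finset.range n, ∑ b ∈ Finset.range n,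
      Polynomial.C (((a.factorial : 𝕂)⁻¹ * (b.factorial : 𝕂)⁻¹) *
        ((N ^ a * N' ^ b - N' ^ b * N ^ a) i j)) * Polynomial.X ^ (a + b) with hp
    have heval : ∀ w : 𝕂,
        (exp (w • N) * exp (w • N') - exp (w • N') * exp (w • N)) i j
          = p.eval w := by
      intro w
      rw [hEform w, hp]
      simp only [Matrix.sum_apply, Matrix.smul_apply, smul_eq_mul,
        Polynomial.eval_finset_sum, Polynomial.eval_mul, Polynomial.eval_C,
        Polynomial.eval_pow, Polynomial.eval_X]
      refine Finset.sum_congr rfl fun a _ => Finset.sum_congr rfl fun b _ => ?_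
      ring
    have hroot : ∀ k : ℕ, p.IsRoot ((k : ℕ) : 𝕂) := by
      intro k
      have h0 : exp ((k : 𝕂) • N) * exp ((k : 𝕂) • N')
          - exp ((k : 𝕂) • N') * exp ((k : 𝕂) • N) = 0 := sub_eq_zero.mpr (hnat k)
      have h1 := congrArg (fun M : Matrix (Fin n) (Fin n) 𝕂 => M i j) h0
      rw [Polynomial.IsRoot, ← heval]
      simpa using h1
    have hp0 : p = 0 := p.eq_zero_of_infinite_isRoot
      (Set.infinite_of_injective_forall_mem (f := (Nat.cast : ℕ → 𝕂))
        Nat.cast_injective hroot)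
    rw [heval z, hp0, Polynomial.eval_zero]
  have hcomm : ∀ z : 𝕂, exp (z • N) * exp (z • N') = exp (z • N') * exp (z • N) :=
    fun z => sub_eq_zero.mp (hzero z)
  rw [hexpA, hexpB, smul_mul_assoc, smul_mul_assoc, mul_smul_comm, mul_smul_comm,
    smul_smul, smul_smul, hcomm, mul_comm (exp ((t : 𝕂) * d)) (exp ((t : 𝕂) * c))]
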